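/- Let (T,Σ,μ) be a σ-finite measure space and f : T × X → ℝ ∪ {+∞} an integrand such that each f_t is Lipschitz with constant K(t), K ∈ L¹(T,ℝ₊), on a ball B(x,δ), and t ↦ f(t,y) is integrable for each y ∈ B(x,δ). Then I_f(y) = ∫_T f(t,y)dμ is Lipschitz on B(x,δ) with constant ∫_T K dμ, and for every u ∈ X, I_f°(x;u) ≤ ∫_T f_t°(x;u) dμ(t). -/

import Mathlib

open Filter Topology MeasureTheory
noncomputable section

/-- The Clarke generalized directional derivative
`φ°(x;u) = limsup_{y→x, s↓0} (φ(y+su) − φ(y))/s`. -/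
noncomputable def clarkeDeriv {X : Type*} [NormedAddCommGroup X] [NormedSpace ℝ X]
    (φ : X → ℝ) (x u : X) : ℝ :=
  Filter.limsup (fun p : X × ℝ => (φ (p.1 + p.2 • u) - φ p.1) / p.2)
    ((𝓝 x) ×ˢ (𝓝[>] (0 : ℝ)))

/-- Fatou-type lemma for real-valued functions. -/
lemma my_fatou {T : Type*} [MeasurableSpace T] {μ : Measure T}
    (g : ℕ → T → ℝ) (hgm : ∀ n, AEStronglyMeasurable (g n) μ)
    (bound : T → ℝ) (hbound : Integrable bound μ)
    (hg0 : ∀ᵐ t ∂μ, ∀ n, 0 ≤ g n t)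
    (ψ : T → ℝ) (hψint : Integrable ψ μ) (hψ0 : ∀ᵐ t ∂μ, 0 ≤ ψ t)
    (hψle : ∀ᵐ t ∂μ, ENNReal.ofReal (ψ t) ≤ Filter.liminf (fun n => ENNReal.ofReal (g n t)) Filter.atTop)
    (hgb : ∀ᵐ t ∂μ, ∀ n, g n t ≤ bound t) :
    ∫ t, ψ t ∂μ ≤ Filter.liminf (fun n => ∫ t, g n t ∂μ) Filter.atTop := by
  have hbound0 : ∀ᵐ t ∂μ, 0 ≤ bound t := by
    filter_upwards [hg0, hgb] with t h0 hb using (h0 0).trans (hb 0)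
  have hglint : ∀ n, ∫⁻ t, ENNReal.ofReal (g n t) ∂μ ≤ ∫⁻ t, ENNReal.ofReal (bound t) ∂μ := by
    intro n
    refine lintegral_mono_ae ?_
    filter_upwards [hgb] with t hb using ENNReal.ofReal_le_ofReal (hb n)
  have hbtop : ∫⁻ t, ENNReal.ofReal (bound t) ∂μ ≠ ⊤ := by
    have := hbound.2
    rw [hasFiniteIntegral_iff_norm] at this
    refine ne_top_of_le_ne_top this.ne (lintegral_mono_ae ?_)
    filter_upwards [hbound0] with t hb
    exact ENNReal.ofReal_le_ofReal (le_abs_self _)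
  have fatou : ∫⁻ t, Filter.liminf (fun n => ENNReal.ofReal (g n t)) Filter.atTop ∂μ
      ≤ Filter.liminf (fun n => ∫⁻ t, ENNReal.ofReal (g n t) ∂μ) Filter.atTop :=
    lintegral_liminf_le' fun n => (ENNReal.measurable_ofReal.comp_aemeasurable (hgm n).aemeasurable)
  have step1 : ∫⁻ t, ENNReal.ofReal (ψ t) ∂μ ≤
      Filter.liminf (fun n => ∫⁻ t, ENNReal.ofReal (g n t) ∂μ) Filter.atTop :=
    (lintegral_mono_ae hψle).trans fatou
  have hliminf_le : Filter.liminf (fun n => ∫⁻ t, ENNReal.ofReal (g n t) ∂μ) Filter.atTop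
      ≤ ∫⁻ t, ENNReal.ofReal (bound t) ∂μ :=
    liminf_le_of_le (by isBoundedDefault) (fun b hb => by
      rcases (hb.and (Eventually.of_forall (fun n => hglint n))).exists with ⟨n, h1, h2⟩
      exact h1.trans h2)
  have hne : Filter.liminf (fun n => ∫⁻ t, ENNReal.ofReal (g n t) ∂μ) Filter.atTop ≠ ⊤ :=
    ne_top_of_le_ne_top hbtop hliminf_le
  have heq : ∀ n, ∫ t, g n t ∂μ = (∫⁻ t, ENNReal.ofReal (g n t) ∂μ).toReal := by
    intro n
    rw [integral_eq_lintegral_of_nonneg_ae (hg0.mono fun t h => h n) (hgm n)]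
  have heqψ : ∫ t, ψ t ∂μ = (∫⁻ t, ENNReal.ofReal (ψ t) ∂μ).toReal := by
    rw [integral_eq_lintegral_of_nonneg_ae hψ0 hψint.1]
  rw [heqψ]
  have : Filter.liminf (fun n => ∫ t, g n t ∂μ) Filter.atTop
      = (Filter.liminf (fun n => ∫⁻ t, ENNReal.ofReal (g n t) ∂μ) Filter.atTop).toReal := by
    simp only [heq]
    exact ENNReal.liminf_toReal_eq hbtop (Eventually.of_forall hglint)
  rw [this]
  exact ENNReal.toReal_mono hne step1

/-- Fatou-type lemma, limsup version. -/
lemma my_fatou_limsup {T : Type*} [MeasurableSpace T] {μ : Measure T}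
    (q : ℕ → T → ℝ) (hq : ∀ n, Integrable (q n) μ)
    (bound : T → ℝ) (hbound : Integrable bound μ)
    (hqb : ∀ᵐ t ∂μ, ∀ n, |q n t| ≤ bound t)
    (φ : T → ℝ) (hφint : Integrable φ μ) (hφb : ∀ᵐ t ∂μ, |φ t| ≤ bound t)
    (hφ : ∀ᵐ t ∂μ, Filter.limsup (fun n => q n t) Filter.atTop ≤ φ t) :
    Filter.limsup (fun n => ∫ t, q n t ∂μ) Filter.atTop ≤ ∫ t, φ t ∂μ := by
  set g : ℕ → T → ℝ := fun n t => bound t - q n t with hg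
  have hgm : ∀ n, AEStronglyMeasurable (g n) μ := fun n => (hbound.sub (hq n)).1
  have hg0 : ∀ᵐ t ∂μ, ∀ n, 0 ≤ g n t := by
    filter_upwards [hqb] with t hb n
    have := (abs_le.1 (hb n)).2
    simp [hg]; linarith
  have hgb2 : ∀ᵐ t ∂μ, ∀ n, g n t ≤ 2 * bound t := by
    filter_upwards [hqb] with t hb n
    have := (abs_le.1 (hb n)).1
    simp only [hg]; linarith
  set ψ : T → ℝ := fun t => bound t - φ t with hψ
  have hψint : Integrable ψ μ := hbound.sub hφint
  have hψ0 : ∀ᵐ t ∂μ, 0 ≤ ψ t := by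
    filter_upwards [hφb] with t hb
    have := (abs_le.1 hb).2; simp [hψ]; linarith
  have hψle : ∀ᵐ t ∂μ, ENNReal.ofReal (ψ t) ≤
      Filter.liminf (fun n => ENNReal.ofReal (g n t)) Filter.atTop := by
    filter_upwards [hqb, hφ] with t hb hlim
    have hbdd : Filter.IsBoundedUnder (· ≥ ·) Filter.atTop (fun n => g n t) :=
      ⟨0, Filter.eventually_map.2 (Eventually.of_forall fun n => by
        have := (abs_le.1 (hb n)).2; simp [hg]; linarith)⟩
    have hreal : ψ t ≤ Filter.liminf (fun n => g n t) Filter.atTop := by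
      have h1 : Filter.liminf (fun n => g n t) Filter.atTop
          = bound t - Filter.limsup (fun n => q n t) Filter.atTop := by
        apply liminf_const_sub Filter.atTop (fun n => q n t) (bound t)
        · exact ⟨bound t, Filter.eventually_map.2 (Eventually.of_forall fun n => (abs_le.1 (hb n)).2)⟩
        · exact Filter.IsBoundedUnder.isCoboundedUnder_le
            ⟨-bound t, Filter.eventually_map.2 (Eventually.of_forall fun n => (abs_le.1 (hb n)).1)⟩
      rw [h1, hψ]
      simp only [sub_le_sub_iff_left]
      exact hlim
    refine (Filter.le_liminf_iff (by isBoundedDefault) (by isBoundedDefault)).2 fun y hy => ?_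
    have hytop : y ≠ ⊤ := hy.ne_top
    have hyr : y.toReal < ψ t := (ENNReal.lt_ofReal_iff_toReal_lt hytop).1 hy
    have := Filter.eventually_lt_of_lt_liminf (lt_of_lt_of_le hyr hreal) hbdd
    filter_upwards [this] with n hn
    exact (ENNReal.lt_ofReal_iff_toReal_lt hytop).2 hn
  have key := my_fatou g hgm (fun t => 2 * bound t) (hbound.const_mul 2) hg0 ψ hψint hψ0 hψle hgb2
  have hint_eq : ∀ n, ∫ t, g n t ∂μ = ∫ t, bound t ∂μ - ∫ t, q n t ∂μ := fun n =>
    integral_sub hbound (hq n)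
  have hbq : ∀ n, |∫ t, q n t ∂μ| ≤ ∫ t, bound t ∂μ := fun n =>
    (Real.norm_eq_abs _ ▸ (norm_integral_le_integral_norm (q n))).trans
      (integral_mono_ae (hq n).norm hbound (hqb.mono fun t h => (Real.norm_eq_abs (q n t)).le.trans (abs_abs (q n t) ▸ (h n))))
  have h2 : Filter.liminf (fun n => ∫ t, g n t ∂μ) Filter.atTop
      = ∫ t, bound t ∂μ - Filter.limsup (fun n => ∫ t, q n t ∂μ) Filter.atTop := by
    simp only [hint_eq]
    apply liminf_const_sub Filter.atTop _ _
    · exact ⟨∫ t, bound t ∂μ, Filter.eventually_map.2 (Eventually.of_forall fun n => le_of_abs_le (hbq n))⟩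
    · exact Filter.IsBoundedUnder.isCoboundedUnder_le
        ⟨-∫ t, bound t ∂μ, Filter.eventually_map.2 (Eventually.of_forall fun n => neg_le_of_abs_le (hbq n))⟩
  have hψeq : ∫ t, ψ t ∂μ = ∫ t, bound t ∂μ - ∫ t, φ t ∂μ := integral_sub hbound hφint
  rw [hψeq, h2] at key
  linarith

/-- If each `f_t` is Lipschitz with constant `K(t)`, `K ∈ L¹`, on the ball `B(x,δ)`, and
`t ↦ f(t,y)` is integrable for `y ∈ B(x,δ)`, then `I_f(y) = ∫_T f(t,y) dμ` is Lipschitz on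
`B(x,δ)` with constant `∫ K dμ`, and `I_f°(x;u) ≤ ∫_T f_t°(x;u) dμ(t)` for every `u`. -/
theorem integral_lipschitz_and_clarkeDeriv_le
    {X : Type*} [NormedAddCommGroup X] [NormedSpace ℝ X]
    {T : Type*} [MeasurableSpace T] (μ : Measure T) [SigmaFinite μ]
    (f : T → X → ℝ) (x : X) (δ : ℝ) (hδ : 0 < δ)
    (K : T → ℝ) (hKint : Integrable K μ) (hK0 : ∀ᵐ t ∂μ, 0 ≤ K t)
    (hlip : ∀ᵐ t ∂μ, LipschitzOnWith (K t).toNNReal (f t) (Metric.ball x δ))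
    (hint : ∀ y ∈ Metric.ball x δ, Integrable (fun t => f t y) μ)
    (hmeas : ∀ u : X, AEStronglyMeasurable (fun t => clarkeDeriv (f t) x u) μ) :
    LipschitzOnWith (∫ t, K t ∂μ).toNNReal (fun y => ∫ t, f t y ∂μ) (Metric.ball x δ) ∧
    (∀ u : X, clarkeDeriv (fun y => ∫ t, f t y ∂μ) x u ≤
      ∫ t, clarkeDeriv (f t) x u ∂μ) := by
  set B := Metric.ball x δ with hB
  set L : ℝ := ∫ t, K t ∂μ with hLdef
  have hL0 : 0 ≤ L := integral_nonneg_of_ae hK0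
  -- a.e. pointwise Lipschitz bound in real form
  have hdiff : ∀ y ∈ B, ∀ z ∈ B, ∀ᵐ t ∂μ, |f t y - f t z| ≤ K t * dist y z := by
    intro y hy z hz
    filter_upwards [hlip, hK0] with t hl hk
    have := hl.dist_le_mul y hy z hz
    rw [Real.dist_eq] at this
    rwa [Real.coe_toNNReal _ hk] at this
  -- the key Lipschitz estimate for the integral
  have hLipInt : ∀ y ∈ B, ∀ z ∈ B,
      |(∫ t, f t y ∂μ) - ∫ t, f t z ∂μ| ≤ L * dist y z := by
    intro y hy z hz
    rw [← integral_sub (hint y hy) (hint z hz)]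
    rw [← Real.norm_eq_abs]
    calc ‖∫ t, (f t y - f t z) ∂μ‖ ≤ ∫ t, K t * dist y z ∂μ := by
          apply norm_integral_le_of_norm_le (hKint.mul_const _)
          filter_upwards [hdiff y hy z hz] with t h
          rwa [Real.norm_eq_abs]
      _ = L * dist y z := by rw [integral_mul_const]
  have part1 : LipschitzOnWith L.toNNReal (fun y => ∫ t, f t y ∂μ) B := by
    apply LipschitzOnWith.of_dist_le_mul
    intro y hy z hz
    rw [Real.dist_eq, Real.coe_toNNReal _ hL0]
    exact hLipInt y hy z hz
  refine ⟨part1, fun u => ?_⟩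
  set l : Filter (X × ℝ) := (𝓝 x) ×ˢ (𝓝[>] (0 : ℝ)) with hl
  haveI : l.NeBot := by rw [hl]; infer_instance
  haveI : l.IsCountablyGenerated := by rw [hl]; infer_instance
  set Q : X × ℝ → T → ℝ := fun p t => (f t (p.1 + p.2 • u) - f t p.1) / p.2 with hQ
  set G : Set (X × ℝ) := {p | p.1 ∈ B ∧ p.1 + p.2 • u ∈ B ∧ 0 < p.2} with hG
  -- eventually in the good set
  have hGev : ∀ᶠ p in l, p ∈ G := by
    have hε : 0 < (δ / 2) / (‖u‖ + 1) := by positivity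
    have h1 : ∀ᶠ y in 𝓝 x, y ∈ Metric.ball x (δ / 2) :=
      Metric.ball_mem_nhds x (by linarith)
    have h2 : ∀ᶠ s in 𝓝[>] (0 : ℝ), s ∈ Set.Ioo 0 ((δ / 2) / (‖u‖ + 1)) :=
      Ioo_mem_nhdsGT_of_mem ⟨le_refl 0, hε⟩
    filter_upwards [h1.prod_mk h2] with p hp
    obtain ⟨hp1, hp2⟩ := hp
    have hpos : 0 < p.2 := hp2.1
    have hu1 : 0 < ‖u‖ + 1 := by positivity
    have hsmall : p.2 * ‖u‖ < δ / 2 := by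
      calc p.2 * ‖u‖ ≤ p.2 * (‖u‖ + 1) := by nlinarith [norm_nonneg u]
        _ < ((δ / 2) / (‖u‖ + 1)) * (‖u‖ + 1) := by
            apply mul_lt_mul_of_pos_right hp2.2 hu1
        _ = δ / 2 := by field_simp
    refine ⟨Metric.ball_subset_ball (by linarith) hp1, ?_, hpos⟩
    rw [hB, Metric.mem_ball, dist_eq_norm]
    calc ‖p.1 + p.2 • u - x‖ ≤ ‖p.1 - x‖ + ‖p.2 • u‖ := by
          have : p.1 + p.2 • u - x = (p.1 - x) + p.2 • u := by abel
          rw [this]; exact norm_add_le _ _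
      _ = ‖p.1 - x‖ + p.2 * ‖u‖ := by
          rw [norm_smul, Real.norm_eq_abs, abs_of_pos hpos]
      _ < δ / 2 + δ / 2 := by
          have := Metric.mem_ball.1 hp1; rw [dist_eq_norm] at this; linarith
      _ = δ := by ring
  -- a.e. bound on difference quotients over the good set
  have hQb : ∀ᵐ t ∂μ, ∀ p ∈ G, |Q p t| ≤ K t * ‖u‖ := by
    filter_upwards [hlip, hK0] with t hlt hkt
    rintro p ⟨h1, h2, h3⟩
    have hd := hlt.dist_le_mul _ h2 _ h1
    rw [Real.dist_eq, Real.coe_toNNReal _ hkt] at hd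
    have : dist (p.1 + p.2 • u) p.1 = p.2 * ‖u‖ := by
      rw [dist_eq_norm]
      simp only [add_sub_cancel_left]
      rw [norm_smul, Real.norm_eq_abs, abs_of_pos h3]
    rw [this] at hd
    rw [hQ]
    simp only [abs_div, abs_of_pos h3]
    rw [div_le_iff₀ h3]
    calc |f t (p.1 + p.2 • u) - f t p.1| ≤ K t * (p.2 * ‖u‖) := hd
      _ = K t * ‖u‖ * p.2 := by ring
  -- a.e. bound on the Clarke derivative
  have hclarke_bd : ∀ᵐ t ∂μ, |clarkeDeriv (f t) x u| ≤ K t * ‖u‖ := by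
    filter_upwards [hQb] with t hb
    have hev : ∀ᶠ p in l, |Q p t| ≤ K t * ‖u‖ := hGev.mono fun p hp => hb p hp
    have hub : ∀ᶠ p in l, Q p t ≤ K t * ‖u‖ := hev.mono fun p hp => le_of_abs_le hp
    have hlb : ∀ᶠ p in l, -(K t * ‖u‖) ≤ Q p t := hev.mono fun p hp => neg_le_of_abs_le hp
    have hbu : l.IsBoundedUnder (· ≤ ·) (fun p => Q p t) := ⟨K t * ‖u‖, Filter.eventually_map.2 hub⟩
    have hbl : l.IsBoundedUnder (· ≥ ·) (fun p => Q p t) := ⟨-(K t * ‖u‖), Filter.eventually_map.2 hlb⟩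
    rw [abs_le]
    constructor
    · exact Filter.le_limsup_of_frequently_le (hlb.frequently) hbu
    · exact Filter.limsup_le_of_le (hbl.isCoboundedUnder_le) hub
  have hclarke_int : Integrable (fun t => clarkeDeriv (f t) x u) μ := by
    refine Integrable.mono' (hKint.mul_const ‖u‖) (hmeas u) ?_
    filter_upwards [hclarke_bd] with t h
    rwa [Real.norm_eq_abs]
  -- bound on the integral quotient over the good set
  set F : X × ℝ → ℝ := fun p => ((∫ t, f t (p.1 + p.2 • u) ∂μ) - ∫ t, f t p.1 ∂μ) / p.2 with hF
  have hFb : ∀ p ∈ G, |F p| ≤ L * ‖u‖ := by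
    rintro p ⟨h1, h2, h3⟩
    have hd := hLipInt _ h2 _ h1
    have : dist (p.1 + p.2 • u) p.1 = p.2 * ‖u‖ := by
      rw [dist_eq_norm]
      simp only [add_sub_cancel_left]
      rw [norm_smul, Real.norm_eq_abs, abs_of_pos h3]
    rw [this] at hd
    rw [hF]
    simp only [abs_div, abs_of_pos h3]
    rw [div_le_iff₀ h3]
    calc |(∫ t, f t (p.1 + p.2 • u) ∂μ) - ∫ t, f t p.1 ∂μ| ≤ L * (p.2 * ‖u‖) := hd
      _ = L * ‖u‖ * p.2 := by ring
  -- the goal is limsup F l ≤ ∫ clarke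
  show Filter.limsup F l ≤ ∫ t, clarkeDeriv (f t) x u ∂μ
  set A : ℝ := ∫ t, clarkeDeriv (f t) x u ∂μ with hA
  by_contra hcon
  push_neg at hcon
  set b : ℝ := (A + Filter.limsup F l) / 2 with hb
  have hAb : A < b := by rw [hb]; linarith
  have hblim : b < Filter.limsup F l := by rw [hb]; linarith
  have hFlb : ∀ᶠ p in l, -(L * ‖u‖) ≤ F p := hGev.mono fun p hp => neg_le_of_abs_le (hFb p hp)
  have hcob : l.IsCoboundedUnder (· ≤ ·) F :=
    Filter.IsBoundedUnder.isCoboundedUnder_le ⟨-(L * ‖u‖), Filter.eventually_map.2 hFlb⟩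
  have hfreq : ∃ᶠ p in l, b < F p := Filter.frequently_lt_of_lt_limsup hcob hblim
  have hfreq2 : ∃ᶠ p in l, b < F p ∧ p ∈ G := hfreq.and_eventually hGev
  obtain ⟨p, hpl, hp⟩ := Filter.exists_seq_forall_of_frequently hfreq2
  -- the sequence of difference quotient functions
  have hpG : ∀ n, p n ∈ G := fun n => (hp n).2
  have hq_int : ∀ n, Integrable (fun t => Q (p n) t) μ := by
    intro n
    obtain ⟨h1, h2, h3⟩ := hpG n
    exact (((hint _ h2).sub (hint _ h1)).div_const _)
  have hFeq : ∀ n, ∫ t, Q (p n) t ∂μ = F (p n) := by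
    intro n
    obtain ⟨h1, h2, h3⟩ := hpG n
    rw [hQ, hF]
    simp only
    rw [integral_div, integral_sub (hint _ h2) (hint _ h1)]
  have hqb : ∀ᵐ t ∂μ, ∀ n, |Q (p n) t| ≤ K t * ‖u‖ := by
    filter_upwards [hQb] with t h n
    exact h (p n) (hpG n)
  have hlimsup_le : ∀ᵐ t ∂μ, Filter.limsup (fun n => Q (p n) t) Filter.atTop ≤
      clarkeDeriv (f t) x u := by
    filter_upwards [hQb] with t hbd
    have hev : ∀ᶠ q in l, Q q t ≤ K t * ‖u‖ :=
      hGev.mono fun q hq => le_of_abs_le (hbd q hq)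
    have hbu : l.IsBoundedUnder (· ≤ ·) (fun q => Q q t) := ⟨K t * ‖u‖, Filter.eventually_map.2 hev⟩
    have hcb : (Filter.map p Filter.atTop).IsCoboundedUnder (· ≤ ·) (fun q => Q q t) := by
      apply Filter.IsBoundedUnder.isCoboundedUnder_le
      refine ⟨-(K t * ‖u‖), Filter.eventually_map.2 ?_⟩
      rw [Filter.eventually_map]
      exact Eventually.of_forall fun n => neg_le_of_abs_le (hbd (p n) (hpG n))
    have h1 : Filter.limsup (fun n => Q (p n) t) Filter.atTop
        = Filter.limsup (fun q => Q q t) (Filter.map p Filter.atTop) := by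
      rw [Filter.limsup, Filter.limsup, Filter.map_map]
      rfl
    rw [h1]
    exact Filter.limsup_le_limsup_of_le hpl hcb hbu
  have key := my_fatou_limsup (fun n => Q (p n)) hq_int (fun t => K t * ‖u‖)
    (hKint.mul_const _) hqb (fun t => clarkeDeriv (f t) x u) hclarke_int hclarke_bd hlimsup_le
  simp only [hFeq] at key
  have hFbd : Filter.IsBoundedUnder (· ≤ ·) Filter.atTop (fun n => F (p n)) :=
    ⟨L * ‖u‖, Filter.eventually_map.2 (Eventually.of_forall fun n => le_of_abs_le (hFb (p n) (hpG n)))⟩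
  have hble : b ≤ Filter.limsup (fun n => F (p n)) Filter.atTop :=
    Filter.le_limsup_of_frequently_le
      (Frequently.of_forall fun n => (hp n).1.le) hFbd
  have hbA : b ≤ A := hble.trans key
  linarith
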